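/- Let 0 < a < x*, B > 0 and θ* ∈ (0,1). Suppose V : [a,x*] → ℝ and p : [a,x*] → (0,1) are continuously differentiable, satisfy V'(x) = r·p(x)·V(x) / ( ((λ+r) − (λ+μ)p(x))·x ) and p'(x) = (λ+r)·p(x)(p(x)−1) / ( ((λ+r) − (λ+μ)p(x))·x ) for all x ∈ [a,x*], with V(x*) = B and p(x*) = θ*. Then for every x ∈ [a,x*]: V(x) = B·( (1 − p(x))/(1 − θ*) )^{r/(r+λ)}, and equivalently V(x) = B·( p(x)·x/(θ*·x*) )^{r/(r−μ)}. -/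

import Mathlib

open Set Filter

theorem stmt_9
    (r mu lam : ℝ) (hmu : 0 ≤ mu) (hr : mu < r) (hlam : 0 ≤ lam)
    (a xs B th : ℝ) (ha : 0 < a) (hax : a < xs) (hB : 0 < B) (hth : th ∈ Set.Ioo (0:ℝ) 1)
    (V p : ℝ → ℝ)
    (hpr : ∀ x ∈ Set.Icc a xs, p x ∈ Set.Ioo (0:ℝ) 1)
    (hodeV : ∀ x ∈ Set.Icc a xs,
      HasDerivAt V (r * p x * V x / (((lam + r) - (lam + mu) * p x) * x)) x)
    (hodep : ∀ x ∈ Set.Icc a xs,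
      HasDerivAt p ((lam + r) * p x * (p x - 1) / (((lam + r) - (lam + mu) * p x) * x)) x)
    (hVx : V xs = B) (hpx : p xs = th) :
    ∀ x ∈ Set.Icc a xs,
      V x = B * ((1 - p x) / (1 - th)) ^ (r / (r + lam)) ∧
      V x = B * (p x * x / (th * xs)) ^ (r / (r - mu)) := by
  obtain ⟨hth0, hth1⟩ := hth
  have hrlam : 0 < r + lam := by linarith
  have hrmu : 0 < r - mu := by linarith
  have hDpos : ∀ x ∈ Set.Icc a xs, 0 < (lam + r) - (lam + mu) * p x := by
    intro x hx
    obtain ⟨h0, h1⟩ := hpr x hx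
    nlinarith
  have hxpos : ∀ x ∈ Set.Icc a xs, 0 < x := fun x hx => lt_of_lt_of_le ha hx.1
  set α := r / (r + lam) with hα
  set β := r / (r - mu) with hβ
  set H : ℝ → ℝ := fun x => V x * (1 - p x) ^ (-α) with hH
  set K : ℝ → ℝ := fun x => V x * (p x * x) ^ (-β) with hK
  have hHderiv : ∀ x ∈ Set.Icc a xs, HasDerivAt H 0 x := by
    intro x hx
    obtain ⟨h0, h1⟩ := hpr x hx
    have h1p : (0:ℝ) < 1 - p x := by linarith
    have hD := hDpos x hx
    have hxp := hxpos x hx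
    have hd1 : HasDerivAt (fun y => 1 - p y)
        (-((lam + r) * p x * (p x - 1) / (((lam + r) - (lam + mu) * p x) * x))) x := by
      exact ((hasDerivAt_const x (1:ℝ)).sub (hodep x hx)).congr_deriv (by ring)
    have hd2 := hd1.rpow_const (p := -α) (Or.inl (ne_of_gt h1p))
    have hmul := (hodeV x hx).mul hd2
    convert hmul using 1
    · rfl
    · rfl
    · rfl
    have hpow : (1 - p x) ^ (-α - 1) = (1 - p x) ^ (-α) / (1 - p x) := by
      rw [Real.rpow_sub h1p, Real.rpow_one]
    rw [hpow, hα]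
    field_simp
    ring
  have hKderiv : ∀ x ∈ Set.Icc a xs, HasDerivAt K 0 x := by
    intro x hx
    obtain ⟨h0, h1⟩ := hpr x hx
    have hD := hDpos x hx
    have hxp := hxpos x hx
    have hpx0 : (0:ℝ) < p x * x := mul_pos h0 hxp
    have hd1 : HasDerivAt (fun y => p y * y)
        (((lam + r) * p x * (p x - 1) / (((lam + r) - (lam + mu) * p x) * x)) * x + p x * 1) x :=
      (hodep x hx).mul (hasDerivAt_id x)
    have hd2 := hd1.rpow_const (p := -β) (Or.inl (ne_of_gt hpx0))
    have hmul := (hodeV x hx).mul hd2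
    convert hmul using 1
    · rfl
    · rfl
    · rfl
    have hpow : (p x * x) ^ (-β - 1) = (p x * x) ^ (-β) / (p x * x) := by
      rw [Real.rpow_sub hpx0, Real.rpow_one]
    rw [hpow, hβ]
    have hD' : lam + r - p x * (lam + mu) ≠ 0 := by nlinarith
    have hrmu' : r - mu ≠ 0 := ne_of_gt hrmu
    field_simp
    ring
  have hHcont : ContinuousOn H (Set.Icc a xs) := fun x hx =>
    ((hHderiv x hx).continuousAt).continuousWithinAt
  have hKcont : ContinuousOn K (Set.Icc a xs) := fun x hx =>
    ((hKderiv x hx).continuousAt).continuousWithinAt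
  have hHconst : ∀ x ∈ Set.Icc a xs, H x = H a :=
    constant_of_has_deriv_right_zero hHcont (fun x hx =>
      ((hHderiv x (Set.mem_Icc_of_Ico hx)).hasDerivWithinAt))
  have hKconst : ∀ x ∈ Set.Icc a xs, K x = K a :=
    constant_of_has_deriv_right_zero hKcont (fun x hx =>
      ((hKderiv x (Set.mem_Icc_of_Ico hx)).hasDerivWithinAt))
  have hxsmem : xs ∈ Set.Icc a xs := Set.right_mem_Icc.mpr (le_of_lt hax)
  intro x hx
  obtain ⟨h0, h1⟩ := hpr x hx
  have h1p : (0:ℝ) < 1 - p x := by linarith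
  have h1th : (0:ℝ) < 1 - th := by linarith
  have hxp := hxpos x hx
  have hpxx : (0:ℝ) < p x * x := mul_pos h0 hxp
  have hthxs : (0:ℝ) < th * xs := mul_pos hth0 (lt_trans ha hax)
  have hHx : H x = H xs := by rw [hHconst x hx, hHconst xs hxsmem]
  have hKx : K x = K xs := by rw [hKconst x hx, hKconst xs hxsmem]
  constructor
  · have : V x * (1 - p x) ^ (-α) = B * (1 - th) ^ (-α) := by
      simpa [hH, hVx, hpx] using hHx
    have hdiv : ((1 - p x) / (1 - th)) ^ α = (1 - p x) ^ α / (1 - th) ^ α :=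
      Real.div_rpow (le_of_lt h1p) (le_of_lt h1th) α
    rw [hdiv]
    rw [Real.rpow_neg (le_of_lt h1p), Real.rpow_neg (le_of_lt h1th)] at this
    have e1 : (1 - p x) ^ α ≠ 0 := ne_of_gt (Real.rpow_pos_of_pos h1p α)
    have e2 : (1 - th) ^ α ≠ 0 := ne_of_gt (Real.rpow_pos_of_pos h1th α)
    field_simp at this ⊢
    linarith [this]
  · have : V x * (p x * x) ^ (-β) = B * (th * xs) ^ (-β) := by
      simpa [hK, hVx, hpx] using hKx
    have hdiv : (p x * x / (th * xs)) ^ β = (p x * x) ^ β / (th * xs) ^ β :=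
      Real.div_rpow (le_of_lt hpxx) (le_of_lt hthxs) β
    rw [hdiv]
    rw [Real.rpow_neg (le_of_lt hpxx), Real.rpow_neg (le_of_lt hthxs)] at this
    have e1 : (p x * x) ^ β ≠ 0 := ne_of_gt (Real.rpow_pos_of_pos hpxx β)
    have e2 : (th * xs) ^ β ≠ 0 := ne_of_gt (Real.rpow_pos_of_pos hthxs β)
    field_simp at this ⊢
    linarith [this]
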